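/- (Theorem 3.1(ii), deterministic core.) Under the Dantzig-selector hypotheses, with h := θ₀ − θ̂, K₂ := (8/ν)‖θ₀‖₁ and K₃ := 4‖θ₀‖₁², one has F_∞(T₀; J)² · ‖θ̂ − θ₀‖_∞² ≤ K₂ γ + K₃ ε, where ε := max_{i,j} |(V(θ₀) − J)_{ij}|. -/

import Mathlib

open Finset

/-- ℓ₁ norm on `Fin p → ℝ`. -/
noncomputable def l1 {p : ℕ} (v : Fin p → ℝ) : ℝ := ∑ i, |v i|

/-- ℓ₁ norm of the subvector indexed by `T`. -/
noncomputable def l1on {p : ℕ} (T : Finset (Fin p)) (v : Fin p → ℝ) : ℝ := ∑ i ∈ T, |v i|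

/-- ℓ₂ norm on `Fin p → ℝ`. -/
noncomputable def l2 {p : ℕ} (v : Fin p → ℝ) : ℝ := Real.sqrt (∑ i, (v i) ^ 2)

/-- ℓ_∞ norm on `Fin p → ℝ`. -/
noncomputable def linf {p : ℕ} (v : Fin p → ℝ) : ℝ := ⨆ i, |v i|

/-- ℓ_q norm on `Fin p → ℝ` for real `q ≥ 1`. -/
noncomputable def lqnorm {p : ℕ} (q : ℝ) (v : Fin p → ℝ) : ℝ := (∑ i, |v i| ^ q) ^ (1 / q)

/-- Quadratic form `hᵀ J h`. -/
noncomputable def quadForm {p : ℕ} (J : Matrix (Fin p) (Fin p) ℝ) (h : Fin p → ℝ) : ℝ :=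
  ∑ i, ∑ j, h i * J i j * h j

/-- The cone `C_T = {h : ‖h_{Tᶜ}‖₁ ≤ ‖h_T‖₁}`. -/
def cone {p : ℕ} (T : Finset (Fin p)) : Set (Fin p → ℝ) := {h | l1on Tᶜ h ≤ l1on T h}

/-- Compatibility factor `κ(T; J)`. -/
noncomputable def kappa {p : ℕ} (T : Finset (Fin p)) (J : Matrix (Fin p) (Fin p) ℝ) : ℝ :=
  sInf {r | ∃ h : Fin p → ℝ, h ≠ 0 ∧ h ∈ cone T ∧
    r = Real.sqrt T.card * Real.sqrt (quadForm J h) / l1on T h}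

/-- Restricted eigenvalue `RE(T; J)`. -/
noncomputable def RE {p : ℕ} (T : Finset (Fin p)) (J : Matrix (Fin p) (Fin p) ℝ) : ℝ :=
  sInf {r | ∃ h : Fin p → ℝ, h ≠ 0 ∧ h ∈ cone T ∧
    r = Real.sqrt (quadForm J h) / l2 h}

/-- Weak cone invertibility factor at `q = ∞`, `F_∞(T; J)`. -/
noncomputable def Finf {p : ℕ} (T : Finset (Fin p)) (J : Matrix (Fin p) (Fin p) ℝ) : ℝ :=
  sInf {r | ∃ h : Fin p → ℝ, h ≠ 0 ∧ h ∈ cone T ∧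
    r = Real.sqrt (quadForm J h) / linf h}

/-- Weak cone invertibility factor `F_q(T; J)` for `q ∈ [1,∞)`
(with the quadratic form without square root, as in the paper's proofs). -/
noncomputable def Fq {p : ℕ} (q : ℝ) (T : Finset (Fin p)) (J : Matrix (Fin p) (Fin p) ℝ) : ℝ :=
  sInf {r | ∃ h : Fin p → ℝ, h ≠ 0 ∧ h ∈ cone T ∧
    r = (T.card : ℝ) ^ (1 / q) * quadForm J h / (l1on T h * lqnorm q h)}

/-- `g(x) = (e^{2x} - 1)/x` for `x ≠ 0`, `g(0) = 2`. -/
noncomputable def g (x : ℝ) : ℝ := if x = 0 then 2 else (Real.exp (2 * x) - 1) / x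

/-- Gradient of the log-quasi-likelihood (divided by `n`), with `b = 0`, `Δ = 1/n`:
`ψ(θ)_i = (1/(nΔ)) Σ_k z_{k,i}(e^{-2⟨θ,z_k⟩}(x_k - x_{k-1})² - Δ)`. -/
noncomputable def psiD {n p : ℕ} (x : Fin (n + 1) → ℝ) (z : Fin n → Fin p → ℝ)
    (θ : Fin p → ℝ) (i : Fin p) : ℝ :=
  (1 / ((n : ℝ) * (1 / n))) * ∑ k, z k i *
    (Real.exp (-2 * ∑ j, θ j * z k j) * (x k.succ - x k.castSucc) ^ 2 - 1 / n)

/-- Negative Hessian (divided by `n`):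
`V(θ) = (2/(nΔ)) Σ_k e^{-2⟨θ,z_k⟩}(x_k - x_{k-1})² z_k z_kᵀ`. -/
noncomputable def VD {n p : ℕ} (x : Fin (n + 1) → ℝ) (z : Fin n → Fin p → ℝ)
    (θ : Fin p → ℝ) : Matrix (Fin p) (Fin p) ℝ := fun i j =>
  (2 / ((n : ℝ) * (1 / n))) * ∑ k, Real.exp (-2 * ∑ l, θ l * z k l) *
    (x k.succ - x k.castSucc) ^ 2 * z k i * z k j

/-- `J = (2/n) Σ_k z_k z_kᵀ`. -/
noncomputable def JD {n p : ℕ} (z : Fin n → Fin p → ℝ) : Matrix (Fin p) (Fin p) ℝ :=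
  fun i j => (2 / (n : ℝ)) * ∑ k, z k i * z k j

/-- `ε = max_{i,j} |(V(θ) - J)_{ij}|`. -/
noncomputable def epsD {n p : ℕ} (x : Fin (n + 1) → ℝ) (z : Fin n → Fin p → ℝ)
    (θ : Fin p → ℝ) : ℝ :=
  ⨆ i, ⨆ j, |VD x z θ i j - JD z i j|


section AuxLemmas

lemma aux_g_pos (x : ℝ) : 0 < g x := by
  unfold g
  rcases lt_trichotomy x 0 with h | h | h
  · rw [if_neg h.ne]
    apply div_pos_of_neg_of_neg _ h
    have : Real.exp (2 * x) < 1 := by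
      rw [← Real.exp_zero]; exact Real.exp_lt_exp.2 (by linarith)
    linarith
  · simp [h]
  · rw [if_neg h.ne']
    apply div_pos _ h
    have : 1 < Real.exp (2 * x) := by
      rw [← Real.exp_zero]; exact Real.exp_lt_exp.2 (by linarith)
    linarith

lemma aux_key_ineq (ν a : ℝ) (hga : ν ≤ g a) : ν * a ^ 2 ≤ a * (Real.exp (2 * a) - 1) := by
  rcases eq_or_ne a 0 with rfl | ha
  · simp
  · have h1 : a * (Real.exp (2 * a) - 1) = a ^ 2 * g a := by
      unfold g; rw [if_neg ha]; field_simp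
    rw [h1]
    nlinarith [sq_nonneg a]

lemma aux_quad_rank1 {p n : ℕ} (c : ℝ) (z : Fin n → Fin p → ℝ) (w : Fin n → ℝ)
    (h : Fin p → ℝ) :
    ∑ i, ∑ j, h i * (c * ∑ k, w k * z k i * z k j) * h j
      = c * ∑ k, w k * (∑ i, h i * z k i) ^ 2 := by
  have e2 : ∀ k : Fin n, ∑ i : Fin p, ∑ j : Fin p, c * (w k * ((h i * z k i) * (h j * z k j)))
      = c * (w k * (∑ i, h i * z k i) ^ 2) := by
    intro k
    have hsq : (∑ i, h i * z k i) ^ 2 = ∑ i, ∑ j, (h i * z k i) * (h j * z k j) := by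
      rw [sq, Finset.sum_mul_sum]
    rw [hsq]
    simp only [Finset.mul_sum]
  calc ∑ i, ∑ j, h i * (c * ∑ k, w k * z k i * z k j) * h j
      = ∑ i, ∑ j, ∑ k, c * (w k * ((h i * z k i) * (h j * z k j))) := by
        refine sum_congr rfl fun i _ => sum_congr rfl fun j _ => ?_
        rw [Finset.mul_sum, Finset.mul_sum, Finset.sum_mul]
        exact Finset.sum_congr rfl fun k _ => by ring
    _ = ∑ i, ∑ k, ∑ j, c * (w k * ((h i * z k i) * (h j * z k j))) :=
        sum_congr rfl fun i _ => Finset.sum_comm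
    _ = ∑ k, ∑ i, ∑ j, c * (w k * ((h i * z k i) * (h j * z k j))) := Finset.sum_comm
    _ = c * ∑ k, w k * (∑ i, h i * z k i) ^ 2 := by
        rw [Finset.mul_sum]
        exact sum_congr rfl fun k _ => e2 k

lemma aux_abs_le_linf {p : ℕ} (v : Fin p → ℝ) (i : Fin p) : |v i| ≤ linf v := by
  unfold linf
  exact le_ciSup (Set.Finite.bddAbove (Set.finite_range fun i => |v i|)) i

lemma aux_linf_nonneg {p : ℕ} [Nonempty (Fin p)] (v : Fin p → ℝ) : 0 ≤ linf v :=
  le_trans (abs_nonneg _) (aux_abs_le_linf v (Classical.arbitrary _))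

end AuxLemmas

/-- Theorem 3.1(ii), deterministic core: with `K₂ := (8/ν)‖θ₀‖₁`, `K₃ := 4‖θ₀‖₁²` and
`ε := max_{i,j} |(V(θ₀) - J)_{ij}|`, one has `F_∞(T₀;J)² ‖θ̂ - θ₀‖_∞² ≤ K₂ γ + K₃ ε`. -/
theorem theorem_3_1_ii
    (n p : ℕ) (hn : 0 < n) (hp : 0 < p)
    (C : ℝ) (hC : 0 < C)
    (x : Fin (n + 1) → ℝ) (z : Fin n → Fin p → ℝ)
    (hz : ∀ k i, |z k i| ≤ C)
    (θ₀ θhat : Fin p → ℝ)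
    (ν : ℝ) (hν : IsLeast (g '' Set.Icc (-(2 * C * l1 θ₀)) (2 * C * l1 θ₀)) ν)
    (γ : ℝ) (hγ : 0 < γ)
    (hfeas : linf (psiD x z θhat) ≤ γ)
    (hmin : l1 θhat ≤ l1 θ₀)
    (htrue : linf (psiD x z θ₀) ≤ γ)
    (hθ₀ : θ₀ ≠ 0) :
    Finf (Finset.univ.filter fun j => θ₀ j ≠ 0) (JD z) ^ 2 * linf (θhat - θ₀) ^ 2 ≤
      8 / ν * l1 θ₀ * γ + 4 * l1 θ₀ ^ 2 * epsD x z θ₀ := by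
  classical
  haveI : Nonempty (Fin p) := ⟨⟨0, hp⟩⟩
  set T : Finset (Fin p) := Finset.univ.filter fun j => θ₀ j ≠ 0 with hT
  set h : Fin p → ℝ := fun i => θhat i - θ₀ i with hh
  have hlinfh : linf (θhat - θ₀) = linf h := rfl
  have hl1θ : 0 < l1 θ₀ := by
    obtain ⟨i, hi⟩ := Function.ne_iff.1 hθ₀
    have : |θ₀ i| ≤ l1 θ₀ :=
      Finset.single_le_sum (fun j _ => abs_nonneg (θ₀ j)) (Finset.mem_univ i)
    have h2 : 0 < |θ₀ i| := abs_pos.2 hi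
    linarith
  have hν0 : 0 < ν := by
    obtain ⟨x₀, _, hx₀⟩ := hν.1
    exact hx₀ ▸ aux_g_pos x₀
  have hl1h : l1 h ≤ 2 * l1 θ₀ := by
    have : l1 h ≤ l1 θhat + l1 θ₀ := by
      unfold l1
      rw [← Finset.sum_add_distrib]
      exact Finset.sum_le_sum fun i _ => abs_sub (θhat i) (θ₀ i)
    linarith
  have hl1h0 : 0 ≤ l1 h := Finset.sum_nonneg fun i _ => abs_nonneg _
  have hentry : ∀ i j, |JD z i j - VD x z θ₀ i j| ≤ epsD x z θ₀ := by
    intro i j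
    rw [abs_sub_comm]
    unfold epsD
    calc |VD x z θ₀ i j - JD z i j|
        ≤ ⨆ j', |VD x z θ₀ i j' - JD z i j'| :=
          le_ciSup (f := fun j' => |VD x z θ₀ i j' - JD z i j'|)
            (Set.Finite.bddAbove (Set.finite_range _)) j
      _ ≤ ⨆ i', ⨆ j', |VD x z θ₀ i' j' - JD z i' j'| :=
          le_ciSup (f := fun i' => ⨆ j', |VD x z θ₀ i' j' - JD z i' j'|)
            (Set.Finite.bddAbove (Set.finite_range _)) i
  have heps0 : 0 ≤ epsD x z θ₀ :=
    le_trans (abs_nonneg _) (hentry ⟨0, hp⟩ ⟨0, hp⟩)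
  -- cone membership
  have hcone : h ∈ cone T := by
    have hTc : ∀ j, j ∈ Tᶜ → θ₀ j = 0 := by
      intro j hj
      rw [Finset.mem_compl, hT, Finset.mem_filter] at hj
      push_neg at hj
      exact hj (Finset.mem_univ j)
    have e1 : l1on Tᶜ θhat = l1on Tᶜ h := by
      unfold l1on
      refine Finset.sum_congr rfl fun j hj => ?_
      simp [hh, hTc j hj]
    have e2 : l1 θ₀ = l1on T θ₀ := by
      unfold l1 l1on
      rw [← Finset.sum_add_sum_compl T fun i => |θ₀ i|]
      have : ∑ i ∈ Tᶜ, |θ₀ i| = 0 :=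
        Finset.sum_eq_zero fun j hj => by rw [hTc j hj, abs_zero]
      linarith
    have e3 : l1 θhat = l1on T θhat + l1on Tᶜ θhat := by
      unfold l1 l1on
      rw [Finset.sum_add_sum_compl T fun i => |θhat i|]
    have e4 : l1on T θ₀ - l1on T h ≤ l1on T θhat := by
      unfold l1on
      rw [← Finset.sum_sub_distrib]
      refine Finset.sum_le_sum fun j _ => ?_
      have h5 := abs_sub_abs_le_abs_sub (θ₀ j) (θhat j)
      have habs : |θ₀ j - θhat j| = |h j| := by
        simp only [hh]; rw [← abs_neg]; congr 1; ring
      linarith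
    show l1on Tᶜ h ≤ l1on T h
    linarith [hmin, e1, e2, e3, e4]
  set E : Fin n → ℝ := fun k =>
    Real.exp (-2 * ∑ l, θ₀ l * z k l) * (x k.succ - x k.castSucc) ^ 2 with hE
  set a : Fin n → ℝ := fun k => -(∑ i, h i * z k i) with ha
  have hE0 : ∀ k, 0 ≤ E k := fun k =>
    mul_nonneg (Real.exp_nonneg _) (sq_nonneg _)
  have hnn : ((n : ℝ) * (1 / n)) = 1 := by
    field_simp
  have hVform : quadForm (VD x z θ₀) h = 2 * ∑ k, E k * a k ^ 2 := by
    unfold quadForm VD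
    rw [hnn]
    rw [aux_quad_rank1 (2 / 1 : ℝ) z
      (fun k => Real.exp (-2 * ∑ l, θ₀ l * z k l) * (x k.succ - x k.castSucc) ^ 2) h,
      div_one]
    congr 1
    refine Finset.sum_congr rfl fun k _ => ?_
    simp only [hE, ha]
    ring
  have hJform : quadForm (JD z) h = (2 / (n : ℝ)) * ∑ k, a k ^ 2 := by
    unfold quadForm JD
    have h6 := aux_quad_rank1 (2 / (n : ℝ)) z (fun _ => 1) h
    simp only [one_mul] at h6
    rw [h6]
    congr 1
    refine Finset.sum_congr rfl fun k _ => ?_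
    simp only [ha]
    ring
  have hQ0 : 0 ≤ quadForm (JD z) h := by
    rw [hJform]
    positivity
  have hpsidiff : ∀ i, psiD x z θ₀ i - psiD x z θhat i
      = ∑ k, (E k * (1 - Real.exp (2 * a k))) * z k i := by
    intro i
    unfold psiD
    rw [hnn]
    rw [one_div_one, one_mul, one_mul, ← Finset.sum_sub_distrib]
    refine Finset.sum_congr rfl fun k _ => ?_
    have hexp : Real.exp (-2 * ∑ j, θhat j * z k j)
        = Real.exp (-2 * ∑ j, θ₀ j * z k j) * Real.exp (2 * a k) := by
      rw [← Real.exp_add]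
      congr 1
      simp only [ha, hh]
      have h7 : ∑ j, θhat j * z k j
          = ∑ j, θ₀ j * z k j + ∑ j, (θhat j - θ₀ j) * z k j := by
        rw [← Finset.sum_add_distrib]
        exact Finset.sum_congr rfl fun j _ => by ring
      rw [h7]; ring
    rw [hexp]
    simp only [hE]
    ring
  have hS : ∑ i, h i * (psiD x z θ₀ i - psiD x z θhat i)
      = ∑ k, E k * (a k * (Real.exp (2 * a k) - 1)) := by
    simp_rw [hpsidiff]
    have e1 : ∀ i, h i * ∑ k, (E k * (1 - Real.exp (2 * a k))) * z k i
        = ∑ k, (E k * (1 - Real.exp (2 * a k))) * (h i * z k i) := by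
      intro i
      rw [Finset.mul_sum]
      exact Finset.sum_congr rfl fun k _ => by ring
    simp_rw [e1]
    rw [Finset.sum_comm]
    refine Finset.sum_congr rfl fun k _ => ?_
    rw [← Finset.mul_sum]
    have h8 : ∑ i, h i * z k i = -a k := by simp only [ha]; ring
    rw [h8]
    ring
  have hSle : ∑ i, h i * (psiD x z θ₀ i - psiD x z θhat i) ≤ l1 h * (2 * γ) := by
    have hstep : ∀ i, h i * (psiD x z θ₀ i - psiD x z θhat i) ≤ |h i| * (2 * γ) := by
      intro i
      have h1 : |psiD x z θ₀ i| ≤ γ := le_trans (aux_abs_le_linf _ i) htrue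
      have h2 : |psiD x z θhat i| ≤ γ := le_trans (aux_abs_le_linf _ i) hfeas
      calc h i * (psiD x z θ₀ i - psiD x z θhat i)
          ≤ |h i * (psiD x z θ₀ i - psiD x z θhat i)| := le_abs_self _
        _ = |h i| * |psiD x z θ₀ i - psiD x z θhat i| := abs_mul _ _
        _ ≤ |h i| * (2 * γ) := by
            refine mul_le_mul_of_nonneg_left ?_ (abs_nonneg _)
            calc |psiD x z θ₀ i - psiD x z θhat i|
                ≤ |psiD x z θ₀ i| + |psiD x z θhat i| := abs_sub _ _
              _ ≤ 2 * γ := by linarith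
    calc ∑ i, h i * (psiD x z θ₀ i - psiD x z θhat i)
        ≤ ∑ i, |h i| * (2 * γ) := Finset.sum_le_sum fun i _ => hstep i
      _ = l1 h * (2 * γ) := by rw [← Finset.sum_mul]; rfl
  have hterm : ∀ k, ν * (E k * a k ^ 2) ≤ E k * (a k * (Real.exp (2 * a k) - 1)) := by
    intro k
    have haIcc : |a k| ≤ 2 * C * l1 θ₀ := by
      simp only [ha]
      rw [abs_neg]
      calc |∑ i, h i * z k i| ≤ ∑ i, |h i * z k i| := Finset.abs_sum_le_sum_abs _ _
        _ ≤ ∑ i, |h i| * C := by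
            refine Finset.sum_le_sum fun i _ => ?_
            rw [abs_mul]
            exact mul_le_mul_of_nonneg_left (hz k i) (abs_nonneg _)
        _ = l1 h * C := by rw [← Finset.sum_mul]; rfl
        _ ≤ 2 * l1 θ₀ * C := mul_le_mul_of_nonneg_right hl1h hC.le
        _ = 2 * C * l1 θ₀ := by ring
    have hga : ν ≤ g (a k) := by
      refine hν.2 ⟨a k, ?_, rfl⟩
      rw [Set.mem_Icc]
      constructor
      · linarith [neg_abs_le (a k)]
      · linarith [le_abs_self (a k)]
    have h9 := aux_key_ineq ν (a k) hga
    calc ν * (E k * a k ^ 2) = E k * (ν * a k ^ 2) := by ring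
      _ ≤ E k * (a k * (Real.exp (2 * a k) - 1)) :=
          mul_le_mul_of_nonneg_left h9 (hE0 k)
  have hVle : quadForm (VD x z θ₀) h ≤ 8 / ν * l1 θ₀ * γ := by
    have h1 : ν * ∑ k, E k * a k ^ 2 ≤ ∑ k, E k * (a k * (Real.exp (2 * a k) - 1)) := by
      rw [Finset.mul_sum]
      exact Finset.sum_le_sum fun k _ => hterm k
    have h2 : ν * ∑ k, E k * a k ^ 2 ≤ 4 * l1 θ₀ * γ := by
      rw [← hS] at h1
      nlinarith [hSle, hl1h, hγ.le, hl1h0]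
    have h3 : ∑ k, E k * a k ^ 2 ≤ 4 * l1 θ₀ * γ / ν := by
      rw [le_div_iff₀ hν0, mul_comm]
      exact h2
    have h4 : (8 : ℝ) / ν * l1 θ₀ * γ = 2 * (4 * l1 θ₀ * γ / ν) := by
      field_simp
      ring
    rw [hVform, h4]
    linarith
  have hJV : quadForm (JD z) h ≤ quadForm (VD x z θ₀) h + l1 h ^ 2 * epsD x z θ₀ := by
    have hsplit : quadForm (JD z) h = quadForm (VD x z θ₀) h
        + ∑ i, ∑ j, h i * (JD z i j - VD x z θ₀ i j) * h j := by
      unfold quadForm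
      rw [← Finset.sum_add_distrib]
      refine Finset.sum_congr rfl fun i _ => ?_
      rw [← Finset.sum_add_distrib]
      exact Finset.sum_congr rfl fun j _ => by ring
    have hbd : ∑ i, ∑ j, h i * (JD z i j - VD x z θ₀ i j) * h j
        ≤ l1 h ^ 2 * epsD x z θ₀ := by
      have step : ∀ i j, h i * (JD z i j - VD x z θ₀ i j) * h j
          ≤ |h i| * epsD x z θ₀ * |h j| := by
        intro i j
        calc h i * (JD z i j - VD x z θ₀ i j) * h j
            ≤ |h i * (JD z i j - VD x z θ₀ i j) * h j| := le_abs_self _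
          _ = |h i| * |JD z i j - VD x z θ₀ i j| * |h j| := by rw [abs_mul, abs_mul]
          _ ≤ |h i| * epsD x z θ₀ * |h j| := by
              refine mul_le_mul_of_nonneg_right ?_ (abs_nonneg _)
              exact mul_le_mul_of_nonneg_left (hentry i j) (abs_nonneg _)
      calc ∑ i, ∑ j, h i * (JD z i j - VD x z θ₀ i j) * h j
          ≤ ∑ i, ∑ j, |h i| * epsD x z θ₀ * |h j| :=
            Finset.sum_le_sum fun i _ => Finset.sum_le_sum fun j _ => step i j
        _ = (∑ i, ∑ j, |h i| * |h j|) * epsD x z θ₀ := by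
            rw [Finset.sum_mul]
            refine Finset.sum_congr rfl fun i _ => ?_
            rw [Finset.sum_mul]
            exact Finset.sum_congr rfl fun j _ => by ring
        _ = ((∑ i, |h i|) * (∑ j, |h j|)) * epsD x z θ₀ := by
            rw [Finset.sum_mul_sum]
        _ = l1 h ^ 2 * epsD x z θ₀ := by
            unfold l1
            ring
    linarith [hsplit, hbd]
  have hQle : quadForm (JD z) h ≤ 8 / ν * l1 θ₀ * γ + 4 * l1 θ₀ ^ 2 * epsD x z θ₀ := by
    have h10 : l1 h ^ 2 * epsD x z θ₀ ≤ 4 * l1 θ₀ ^ 2 * epsD x z θ₀ := by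
      have : l1 h ^ 2 ≤ 4 * l1 θ₀ ^ 2 := by nlinarith
      nlinarith
    linarith [hJV, hVle]
  rw [hlinfh]
  rcases eq_or_ne h 0 with h0 | hne
  · have hz0 : linf h = 0 := by
      rw [h0]
      unfold linf
      simp
    rw [hz0]
    have t1 : 0 ≤ 8 / ν * l1 θ₀ * γ :=
      mul_nonneg (mul_nonneg (div_nonneg (by norm_num) hν0.le) hl1θ.le) hγ.le
    have t2 : 0 ≤ 4 * l1 θ₀ ^ 2 * epsD x z θ₀ :=
      mul_nonneg (by positivity) heps0
    simpa using add_nonneg t1 t2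
  · have hlinfpos : 0 < linf h := by
      obtain ⟨i, hi⟩ := Function.ne_iff.1 hne
      exact lt_of_lt_of_le (abs_pos.2 hi) (aux_abs_le_linf h i)
    have hmem : Real.sqrt (quadForm (JD z) h) / linf h ∈
        {r | ∃ h' : Fin p → ℝ, h' ≠ 0 ∧ h' ∈ cone T ∧
          r = Real.sqrt (quadForm (JD z) h') / linf h'} := ⟨h, hne, hcone, rfl⟩
    have hbdd : BddBelow {r | ∃ h' : Fin p → ℝ, h' ≠ 0 ∧ h' ∈ cone T ∧
        r = Real.sqrt (quadForm (JD z) h') / linf h'} := by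
      refine ⟨0, fun r hr => ?_⟩
      obtain ⟨h', hne', _, rfl⟩ := hr
      exact div_nonneg (Real.sqrt_nonneg _) (aux_linf_nonneg h')
    have hF0 : 0 ≤ Finf T (JD z) := by
      unfold Finf
      refine le_csInf ⟨_, hmem⟩ fun r hr => ?_
      obtain ⟨h', hne', _, rfl⟩ := hr
      exact div_nonneg (Real.sqrt_nonneg _) (aux_linf_nonneg h')
    have hFle : Finf T (JD z) ≤ Real.sqrt (quadForm (JD z) h) / linf h := by
      unfold Finf
      exact csInf_le hbdd hmem
    have hsq : Finf T (JD z) ^ 2 * linf h ^ 2 ≤ quadForm (JD z) h := by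
      have h1 : Finf T (JD z) ^ 2 ≤ (Real.sqrt (quadForm (JD z) h) / linf h) ^ 2 :=
        pow_le_pow_left₀ hF0 hFle 2
      have h2 : (Real.sqrt (quadForm (JD z) h) / linf h) ^ 2 * linf h ^ 2
          = quadForm (JD z) h := by
        rw [div_pow, div_mul_cancel₀ _ (pow_ne_zero 2 hlinfpos.ne'), Real.sq_sqrt hQ0]
      calc Finf T (JD z) ^ 2 * linf h ^ 2
          ≤ (Real.sqrt (quadForm (JD z) h) / linf h) ^ 2 * linf h ^ 2 :=
            mul_le_mul_of_nonneg_right h1 (sq_nonneg _)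
        _ = quadForm (JD z) h := h2
    exact le_trans hsq hQle
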